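/- The Chu–Vandermonde identity: for every nonnegative integer n and parameters b, c (with (c)_n ≠ 0), Σ_{i=0}^{n} (-n)_i (b)_i / (i! (c)_i) = (c - b)_n / (c)_n. -/

import Mathlib

noncomputable def poch (x : ℝ) (n : ℕ) : ℝ := ∏ i ∈ Finset.range n, (x + i)

lemma poch_zero (x : ℝ) : poch x 0 = 1 := by simp [poch]

lemma poch_succ (x : ℝ) (m : ℕ) : poch x (m + 1) = poch x m * (x + m) := by
  simp [poch, Finset.prod_range_succ]

lemma poch_succ' (x : ℝ) (m : ℕ) : poch x (m + 1) = x * poch (x + 1) m := by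
  rw [poch, Finset.prod_range_succ']
  simp only [Nat.cast_zero, add_zero, mul_comm]
  congr 1
  unfold poch
  apply Finset.prod_congr rfl
  intro i _
  push_cast
  ring

lemma poch_add (x : ℝ) (a b : ℕ) : poch x (a + b) = poch x a * poch (x + a) b := by
  rw [poch, Finset.prod_range_add]
  congr 1
  apply Finset.prod_congr rfl
  intro i _
  push_cast
  ring

lemma key (n : ℕ) : ∀ b c : ℝ,
    ∑ i ∈ Finset.range (n + 1),
      (-1 : ℝ) ^ i * (n.choose i) * poch b i * poch (c + i) (n - i)
    = poch (c - b) n := by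
  induction n with
  | zero => intro b c; simp [poch_zero]
  | succ n ih =>
    intro b c
    have peel : ∀ g : ℕ → ℝ, ∑ i ∈ Finset.range (n + 2), g i
        = g 0 + ∑ i ∈ Finset.range (n + 1), g (i + 1) := by
      intro g; rw [Finset.sum_range_succ']; ring
    rw [peel]
    have split : ∀ i, ((n + 1).choose (i + 1) : ℝ) = n.choose i + n.choose (i + 1) := by
      intro i; rw [Nat.choose_succ_succ]; push_cast; ring
    have e1 : ∑ i ∈ Finset.range (n + 1),
        (-1 : ℝ) ^ (i + 1) * ((n + 1).choose (i + 1)) * poch b (i + 1)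
          * poch (c + (i + 1 : ℕ)) (n + 1 - (i + 1))
        = (∑ i ∈ Finset.range (n + 1),
            (-1 : ℝ) ^ (i + 1) * (n.choose (i + 1)) * poch b (i + 1)
              * poch (c + (i + 1 : ℕ)) (n - i))
          + ∑ i ∈ Finset.range (n + 1),
            (-1 : ℝ) ^ (i + 1) * (n.choose i) * poch b (i + 1)
              * poch (c + (i + 1 : ℕ)) (n - i) := by
      rw [← Finset.sum_add_distrib]
      apply Finset.sum_congr rfl
      intro i _
      rw [split i]
      have : n + 1 - (i + 1) = n - i := by omega
      rw [this]; ring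
    rw [e1]
    -- first piece together with the i = 0 term recombines
    have e2 : ((-1 : ℝ) ^ 0 * ((n + 1).choose 0) * poch b 0 * poch (c + (0 : ℕ)) (n + 1 - 0))
        + ∑ i ∈ Finset.range (n + 1),
            (-1 : ℝ) ^ (i + 1) * (n.choose (i + 1)) * poch b (i + 1)
              * poch (c + (i + 1 : ℕ)) (n - i)
        = ∑ i ∈ Finset.range (n + 1),
            (-1 : ℝ) ^ i * (n.choose i) * poch b i * poch (c + i) (n + 1 - i) := by
      rw [Finset.sum_range_succ]
      have hlast : ((-1 : ℝ) ^ (n + 1)) * (n.choose (n + 1)) * poch b (n + 1)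
          * poch (c + (n + 1 : ℕ)) (n - n) = 0 := by
        simp [Nat.choose_succ_self]
      rw [hlast, Finset.sum_range_succ']
      simp only [Nat.cast_zero, add_zero, pow_zero, Nat.choose_zero_right, Nat.cast_one,
        poch_zero, one_mul, mul_one, Nat.sub_zero]
      have h1 : ∀ i ∈ Finset.range n,
          (-1 : ℝ) ^ (i + 1) * (n.choose (i + 1)) * poch b (i + 1)
              * poch (c + ((i : ℕ) + 1 : ℕ)) (n + 1 - (i + 1))
          = (-1 : ℝ) ^ (i + 1) * (n.choose (i + 1)) * poch b (i + 1)
              * poch (c + ((i + 1 : ℕ) : ℝ)) (n - i) := by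
        intro i hi
        have : n + 1 - (i + 1) = n - i := by omega
        rw [this]
      rw [Finset.sum_congr rfl h1]
      push_cast
      ring
    rw [← add_assoc, e2, ← Finset.sum_add_distrib]
    have e3 : ∑ i ∈ Finset.range (n + 1),
        ((-1 : ℝ) ^ i * (n.choose i) * poch b i * poch (c + i) (n + 1 - i)
          + (-1 : ℝ) ^ (i + 1) * (n.choose i) * poch b (i + 1) * poch (c + (i + 1 : ℕ)) (n - i))
        = (c - b) * ∑ i ∈ Finset.range (n + 1),
            (-1 : ℝ) ^ i * (n.choose i) * poch b i * poch ((c + 1) + i) (n - i) := by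
      rw [Finset.mul_sum]
      apply Finset.sum_congr rfl
      intro i hi
      have h4 : n + 1 - i = (n - i) + 1 := by
        have := Finset.mem_range.mp hi; omega
      rw [h4, poch_succ', poch_succ b i]
      have ha : c + (i : ℝ) + 1 = (c + 1) + i := by ring
      have hb : c + ((i + 1 : ℕ) : ℝ) = (c + 1) + i := by push_cast; ring
      rw [ha, hb]
      ring
    rw [e3, ih b (c + 1), poch_succ']
    have : c + 1 - b = c - b + 1 := by ring
    rw [this]

lemma poch_neg_nat (n i : ℕ) (h : i ≤ n) :
    poch (-(n : ℝ)) i = (-1 : ℝ) ^ i * (Nat.descFactorial n i : ℝ) := by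
  rw [poch, Nat.descFactorial_eq_prod_range, Nat.cast_prod]
  have e : ∀ j ∈ Finset.range i, (-(n : ℝ) + j) = (-1) * ((n - j : ℕ) : ℝ) := by
    intro j hj
    have hj' : j ≤ n := by have := Finset.mem_range.mp hj; omega
    rw [Nat.cast_sub hj']
    ring
  rw [Finset.prod_congr rfl e, Finset.prod_mul_distrib, Finset.prod_const, Finset.card_range]

/-- The Chu–Vandermonde identity. -/
theorem stmt1 (n : ℕ) (b c : ℝ) (hc : ∀ i ≤ n, poch c i ≠ 0) :
    ∑ i ∈ Finset.range (n + 1),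
      poch (-(n : ℝ)) i * poch b i / ((Nat.factorial i : ℝ) * poch c i)
    = poch (c - b) n / poch c n := by
  have hcn : poch c n ≠ 0 := hc n le_rfl
  have step : ∀ i ∈ Finset.range (n + 1),
      poch (-(n : ℝ)) i * poch b i / ((Nat.factorial i : ℝ) * poch c i)
      = (-1 : ℝ) ^ i * (n.choose i) * poch b i * poch (c + i) (n - i) / poch c n := by
    intro i hi
    have hin : i ≤ n := by have := Finset.mem_range.mp hi; omega
    have hsplit : poch c n = poch c i * poch (c + i) (n - i) := by
      rw [← poch_add]; congr 1; omega
    have hci : poch c i ≠ 0 := hc i hin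
    have hp2 : poch (c + i) (n - i) ≠ 0 := by
      intro h; exact hcn (by rw [hsplit, h, mul_zero])
    have hfac : ((Nat.factorial i : ℕ) : ℝ) ≠ 0 := by
      exact_mod_cast (Nat.factorial_ne_zero i)
    rw [poch_neg_nat n i hin, Nat.descFactorial_eq_factorial_mul_choose, hsplit]
    push_cast
    field_simp
  rw [Finset.sum_congr rfl step, ← Finset.sum_div, key n b c]
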